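/- arXiv:1609.07833 — 3 statements merged into one kernel-verified Lean document; each statement's English description precedes it below -/
import Mathlib

section
/- Let q be even and n = 4. Let L(X) = X^{q^3} + aX^{q^2} + bX^q with a, b ∈ F_{q^4}, and set c_1 = b^q + a^{1+q} and c_2 = 1 + b^{1+q^2}. If c_1 = c_2 = 0, then there exists u ∈ F_{q^4}^* such that a = u^{q^3−1}, b = u^{q^2−1}, and L(x) = u^{-1}·Tr_{F_{q^4}/F_q}(u^q x) + u^{q−1}x for all x ∈ F_{q^4}. -/
set_option maxHeartbeats 1000000 in
/-- **case `c₁ = c₂ = 0` in Theorem on `n = 4`.** If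
`L(X) = X^{q³} + aX^{q²} + bX^q` with `b^q + a^{1+q} = 0` and `1 + b^{1+q²} = 0`,
then `a = u^{q³-1}`, `b = u^{q²-1}` for some `u ≠ 0`, and
`L(x) = u⁻¹·Tr_{F_{q⁴}/F_q}(u^q x) + u^{q-1} x`. -/
theorem degenerate_L_is_trace_form (q : ℕ) (hq : Even q) (hq' : IsPrimePow q)
    (K Lf : Type) [Field K] [Fintype K] [Field Lf] [Fintype Lf] [Algebra K Lf]
    (hcard : Fintype.card K = q)
    (hdim : Module.finrank K Lf = 4)
    (a b : Lf)
    (hc1 : b ^ q + a ^ (1 + q) = 0)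
    (hc2 : 1 + b ^ (1 + q ^ 2) = 0)
    (L : Lf → Lf)
    (hL : ∀ x, L x = x ^ (q ^ 3) + a * x ^ (q ^ 2) + b * x ^ q) :
    ∃ u : Lf, u ≠ 0 ∧ a = u ^ (q ^ 3 - 1) ∧ b = u ^ (q ^ 2 - 1) ∧
      ∀ x : Lf, L x =
        u⁻¹ * algebraMap K Lf (Algebra.trace K Lf (u ^ q * x)) + u ^ (q - 1) * x := by
  classical
  -- q = 2 ^ k
  obtain ⟨p, k, hp, hk, hpk⟩ := hq'
  have hp2 : p = 2 := by
    obtain ⟨m, hm⟩ := hq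
    have h2 : (2 : ℕ) ∣ p ^ k := by
      rw [hpk]; exact ⟨m, by omega⟩
    have := Nat.Prime.dvd_of_dvd_pow Nat.prime_two h2
    exact ((Nat.prime_dvd_prime_iff_eq Nat.prime_two (Nat.prime_iff.mpr hp)).mp this).symm
  have hq2 : q = 2 ^ k := by rw [← hpk, hp2]
  have hqge : 2 ≤ q := by
    rw [hq2]
    calc 2 = 2 ^ 1 := by norm_num
    _ ≤ 2 ^ k := Nat.pow_le_pow_right (by norm_num) hk
  -- characteristic 2
  obtain ⟨r, hr⟩ := CharP.exists K
  obtain ⟨n, hrp, hcardr⟩ := FiniteField.card K r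
  have hr2 : r = 2 := by
    have h2 : (2 : ℕ) ∣ r ^ (n : ℕ) := by
      rw [← hcardr, hcard, hq2]
      exact dvd_pow_self 2 (by omega)
    have := Nat.Prime.dvd_of_dvd_pow Nat.prime_two h2
    exact ((Nat.prime_dvd_prime_iff_eq Nat.prime_two hrp).mp this).symm
  haveI hK2 : CharP K 2 := hr2 ▸ hr
  haveI hL2 : CharP Lf 2 := charP_of_injective_algebraMap (algebraMap K Lf).injective 2
  have h2z : (2 : Lf) = 0 := by
    rw [← one_add_one_eq_two]; exact CharTwo.add_self_eq_zero 1
  -- cardinality of Lf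
  have hcardL : Fintype.card Lf = q ^ 4 := by
    have h := Module.card_fintype (Module.finBasis K Lf)
    simpa [hcard, hdim] using h
  -- Frobenius as K-algebra automorphism
  haveI : ExpChar Lf 2 := ExpChar.prime Nat.fact_prime_two.out
  have hq2e : ∀ x : Lf, x ^ q = (iterateFrobenius Lf 2 k) x := fun x => by
    rw [iterateFrobenius_def, ← hq2]
  have hcomm : ∀ c : K, (iterateFrobenius Lf 2 k) (algebraMap K Lf c) = algebraMap K Lf c := by
    intro c
    rw [← hq2e, ← map_pow]
    congr 1
    rw [← hcard]
    exact FiniteField.pow_card c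
  let σa : Lf →ₐ[K] Lf := { iterateFrobenius Lf 2 k with commutes' := hcomm }
  have hbija : Function.Bijective σa :=
    Finite.injective_iff_bijective.mp (σa.toRingHom.injective)
  let σ : Lf ≃ₐ[K] Lf := AlgEquiv.ofBijective σa hbija
  have hσ : ∀ x : Lf, σ x = x ^ q := fun x => (hq2e x).symm
  have hσpow : ∀ (i : ℕ) (x : Lf), (σ ^ i) x = x ^ q ^ i := by
    intro i
    induction i with
    | zero => intro x; simp
    | succ m ih =>
      intro x
      rw [pow_succ, AlgEquiv.mul_apply, hσ, ih, ← pow_mul, ← pow_succ']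
  -- powers of σ are distinct
  have hpowne : ∀ d : ℕ, 0 < d → d < 4 → σ ^ d ≠ 1 := by
    intro d hd0 hd4 h1
    have hall : ∀ x : Lfˣ, x ^ (q ^ d - 1) = 1 := by
      intro x
      have hx : (x : Lf) ^ q ^ d = (x : Lf) := by
        have := congrArg (fun f : Lf ≃ₐ[K] Lf => f (x : Lf)) h1
        simpa [hσpow] using this
      have hx' : x ^ q ^ d = x := Units.ext (by
        rw [Units.val_pow_eq_pow_val]; exact hx)
      have : x ^ (q ^ d - 1) * x = 1 * x := by
        rw [one_mul, ← pow_succ]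
        rw [show q ^ d - 1 + 1 = q ^ d by
          have : 1 ≤ q ^ d := Nat.one_le_pow _ _ (by omega)
          omega]
        exact hx'
      exact mul_right_cancel this
    have hdvd := (FiniteField.forall_pow_eq_one_iff Lf (q ^ d - 1)).mp hall
    rw [hcardL] at hdvd
    have hlt : q ^ d < q ^ 4 := Nat.pow_lt_pow_right (by omega) hd4
    have hge : 1 ≤ q ^ d := Nat.one_le_pow _ _ (by omega)
    have h2d : 2 ≤ q ^ d := by
      calc 2 ≤ q := hqge
        _ = q ^ 1 := (pow_one q).symm
        _ ≤ q ^ d := Nat.pow_le_pow_right (by omega) hd0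
    have := Nat.le_of_dvd (by omega) hdvd
    omega
  have key4 : ∀ i j : ℕ, i < j → j < 4 → σ ^ i ≠ σ ^ j := by
    intro i j hij hj4 h
    apply hpowne (j - i) (by omega) (by omega)
    have h2 : σ ^ i * σ ^ (j - i) = σ ^ i * 1 := by
      rw [mul_one, ← pow_add, Nat.add_sub_cancel' hij.le]
      exact h.symm
    exact mul_left_cancel h2
  have hinj4 : Function.Injective (fun i : Fin 4 => σ ^ (i : ℕ)) := by
    intro i j hij
    simp only at hij
    rcases lt_trichotomy (i : ℕ) (j : ℕ) with h | h | h
    · exact absurd hij (key4 _ _ h j.isLt)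
    · exact Fin.ext h
    · exact absurd hij.symm (key4 _ _ h i.isLt)
  have hcard4 : Fintype.card (Lf ≃ₐ[K] Lf) = 4 := by
    rw [← Nat.card_eq_fintype_card, IsGalois.card_aut_eq_finrank, hdim]
  have hbij4 : Function.Bijective (fun i : Fin 4 => σ ^ (i : ℕ)) :=
    (Fintype.bijective_iff_injective_and_card _).mpr ⟨hinj4, by simp [hcard4]⟩
  -- trace formula
  have htr : ∀ y : Lf, algebraMap K Lf (Algebra.trace K Lf y)
      = y + y ^ q + y ^ q ^ 2 + y ^ q ^ 3 := by
    intro y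
    have hsum := Fintype.sum_bijective _ hbij4
      (fun i : Fin 4 => (σ ^ (i : ℕ)) y) (fun τ : Lf ≃ₐ[K] Lf => τ y) (fun i => rfl)
    rw [trace_eq_sum_automorphisms, ← hsum, Fin.sum_univ_four]
    simp only [hσpow]
    have e0 : ((0 : Fin 4) : ℕ) = 0 := rfl
    have e1 : ((1 : Fin 4) : ℕ) = 1 := rfl
    have e2 : ((2 : Fin 4) : ℕ) = 2 := rfl
    have e3 : ((3 : Fin 4) : ℕ) = 3 := rfl
    rw [e0, e1, e2, e3, pow_zero, pow_one, pow_one]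
  -- basic consequences of the hypotheses
  have hb1 : b ^ (1 + q ^ 2) = 1 := by linear_combination hc2 - h2z
  have hbq : b ^ q = a ^ (1 + q) := by linear_combination hc1 - a ^ (1 + q) * h2z
  have hbne : b ≠ 0 := by
    intro h
    rw [h, zero_pow (by omega : 1 + q ^ 2 ≠ 0)] at hb1
    exact zero_ne_one hb1
  have hane : a ≠ 0 := by
    intro h
    rw [h, zero_pow (by omega : 1 + q ≠ 0)] at hbq
    exact hbne (pow_eq_zero_iff (by omega : q ≠ 0) |>.mp hbq)
  have hnorm : a ^ (1 + q + q ^ 2 + q ^ 3) = 1 := by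
    have e1 : 1 + q + q ^ 2 + q ^ 3 = (1 + q) * (1 + q ^ 2) := by ring
    rw [e1, pow_mul, ← hbq, ← pow_mul, mul_comm, pow_mul, hb1, one_pow]
  -- cyclic group argument
  have hcardU : Fintype.card Lfˣ = q ^ 4 - 1 := by
    rw [Fintype.card_units, hcardL]
  obtain ⟨g, hg⟩ := IsCyclic.exists_generator (α := Lfˣ)
  have hordg : orderOf g = q ^ 4 - 1 := by
    rw [orderOf_eq_card_of_forall_mem_zpowers hg, Nat.card_eq_fintype_card, hcardU]
  set au : Lfˣ := Units.mk0 a hane with hau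
  obtain ⟨i, hi⟩ : ∃ i : ℕ, g ^ i = au := by
    have := mem_powers_iff_mem_zpowers.mpr (hg au)
    exact (Submonoid.mem_powers_iff au g).mp this
  have hauM : au ^ (1 + q + q ^ 2 + q ^ 3) = 1 := Units.ext (by
    rw [Units.val_pow_eq_pow_val, Units.val_one, hau, Units.val_mk0]; exact hnorm)
  have hdvd : q ^ 4 - 1 ∣ i * (1 + q + q ^ 2 + q ^ 3) := by
    rw [← hordg]
    apply orderOf_dvd_of_pow_eq_one
    rw [pow_mul, hi, hauM]
  have hM0 : 0 < 1 + q + q ^ 2 + q ^ 3 := by positivity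
  have hfac : q ^ 4 - 1 = (q - 1) * (1 + q + q ^ 2 + q ^ 3) := by
    zify [show 1 ≤ q from by omega, show 1 ≤ q ^ 4 from Nat.one_le_pow _ _ (by omega)]
    ring
  have hdvd2 : q - 1 ∣ i := by
    rw [hfac] at hdvd
    exact (Nat.mul_dvd_mul_iff_right hM0).mp hdvd
  obtain ⟨j, hj⟩ := hdvd2
  set vu : Lfˣ := g ^ j with hvu
  have hvq : vu ^ (q - 1) = au := by
    rw [hvu, ← pow_mul, mul_comm j (q - 1), ← hj, hi]
  set uu : Lfˣ := vu ^ (q ^ 4 - q - 1) with huu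
  have hvN : vu ^ (q ^ 4 - 1) = 1 := by rw [← hcardU]; exact pow_card_eq_one
  -- bounds for zify
  have hb4 : (1 : ℕ) ≤ q ^ 4 := Nat.one_le_pow _ _ (by omega)
  have hb3 : (1 : ℕ) ≤ q ^ 3 := Nat.one_le_pow _ _ (by omega)
  have hb2' : (1 : ℕ) ≤ q ^ 2 := Nat.one_le_pow _ _ (by omega)
  have hle2 : q ≤ q ^ 2 := Nat.le_self_pow (by norm_num) q
  have hle3 : q ≤ q ^ 3 := Nat.le_self_pow (by norm_num) q
  have hle4 : q ≤ q ^ 4 := Nat.le_self_pow (by norm_num) q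
  have hsq : 2 * q ≤ q * q := Nat.mul_le_mul_right q hqge
  have hsq2 : q * q = q ^ 2 := (sq q).symm
  have h24 : q ^ 2 ≤ q ^ 4 := Nat.pow_le_pow_right (by omega) (by norm_num)
  have hq4big : q + 1 ≤ q ^ 4 := by omega
  have hq3big : 2 ≤ q ^ 3 := by omega
  have hq4big2 : 2 ≤ q ^ 4 := by omega
  have I1 : (q ^ 4 - q - 1) * (q ^ 3 - 1) = (q - 1) + (q ^ 4 - 1) * (q ^ 3 - 2) := by
    zify [show 1 ≤ q from by omega, hb3, hb4, hq3big,
      show q ≤ q ^ 4 from by omega, show 1 ≤ q ^ 4 - q from by omega]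
    ring
  have hA : uu ^ (q ^ 3 - 1) = au := by
    rw [huu, ← pow_mul, I1, pow_add, pow_mul, hvN, one_pow, mul_one, hvq]
  have huN : (uu : Lf) ^ (q ^ 4 - 1) = 1 := by
    rw [← hcardL]
    exact FiniteField.pow_card_sub_one_eq_one _ uu.ne_zero
  have haeq : a = (uu : Lf) ^ (q ^ 3 - 1) := by
    rw [← Units.val_pow_eq_pow_val, hA, hau, Units.val_mk0]
  -- b = u^(q^2-1)
  have I2 : (q ^ 3 - 1) * ((1 + q) * q ^ 3) = (q ^ 2 - 1) + (q ^ 4 - 1) * (q ^ 3 + q ^ 2 - 1) := by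
    zify [hb2', hb3, hb4, show 1 ≤ q ^ 3 + q ^ 2 from by omega]
    ring
  have hbcard : b ^ q ^ 4 = b := by rw [← hcardL]; exact FiniteField.pow_card b
  have hbeq : b = (uu : Lf) ^ (q ^ 2 - 1) := by
    calc b = b ^ q ^ 4 := hbcard.symm
      _ = (b ^ q) ^ (q ^ 3) := by rw [← pow_mul]; congr 1; ring
      _ = (a ^ (1 + q)) ^ (q ^ 3) := by rw [hbq]
      _ = a ^ ((1 + q) * q ^ 3) := by rw [← pow_mul]
      _ = ((uu : Lf) ^ (q ^ 3 - 1)) ^ ((1 + q) * q ^ 3) := by rw [haeq]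
      _ = (uu : Lf) ^ ((q ^ 3 - 1) * ((1 + q) * q ^ 3)) := by rw [← pow_mul]
      _ = (uu : Lf) ^ ((q ^ 2 - 1) + (q ^ 4 - 1) * (q ^ 3 + q ^ 2 - 1)) := by rw [I2]
      _ = (uu : Lf) ^ (q ^ 2 - 1) := by rw [pow_add, pow_mul, huN, one_pow, mul_one]
  -- reduction lemma for exponents
  have hred : ∀ s t c : ℕ, s = t + (q ^ 4 - 1) * c → (uu : Lf) ^ s = (uu : Lf) ^ t := by
    intro s t c h
    rw [h, pow_add, pow_mul, huN, one_pow, mul_one]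
  have hinv : ((uu : Lf))⁻¹ = (uu : Lf) ^ (q ^ 4 - 2) := by
    symm
    apply eq_inv_of_mul_eq_one_left
    rw [← pow_succ, show q ^ 4 - 2 + 1 = q ^ 4 - 1 from by omega, huN]
  refine ⟨(uu : Lf), uu.ne_zero, haeq, hbeq, ?_⟩
  intro x
  rw [hL, htr, hinv]
  have key : ∀ m : ℕ, ((uu : Lf) ^ q * x) ^ (q ^ m)
      = (uu : Lf) ^ (q ^ (m + 1)) * x ^ (q ^ m) := by
    intro m
    rw [mul_pow, ← pow_mul, ← pow_succ']
  have k1 : ((uu : Lf) ^ q * x) ^ q = (uu : Lf) ^ (q ^ 2) * x ^ q := by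
    have := key 1
    rw [pow_one] at this
    exact this
  rw [k1, key 2, key 3]
  have E1 : (uu : Lf) ^ (q ^ 4 - 2) * (uu : Lf) ^ q = (uu : Lf) ^ (q - 1) := by
    rw [← pow_add]
    exact hred _ _ 1 (by zify [show 2 ≤ q ^ 4 from hq4big2, hb4, show 1 ≤ q from by omega]; ring)
  have E2 : (uu : Lf) ^ (q ^ 4 - 2) * (uu : Lf) ^ (q ^ 2) = (uu : Lf) ^ (q ^ 2 - 1) := by
    rw [← pow_add]
    exact hred _ _ 1 (by zify [show 2 ≤ q ^ 4 from hq4big2, hb4, hb2']; ring)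
  have E3 : (uu : Lf) ^ (q ^ 4 - 2) * (uu : Lf) ^ (q ^ 3) = (uu : Lf) ^ (q ^ 3 - 1) := by
    rw [← pow_add]
    exact hred _ _ 1 (by zify [show 2 ≤ q ^ 4 from hq4big2, hb4, hb3]; ring)
  have E4 : (uu : Lf) ^ (q ^ 4 - 2) * (uu : Lf) ^ (q ^ 4) = 1 := by
    rw [← pow_add]
    have := hred (q ^ 4 - 2 + q ^ 4) 0 2
      (by zify [show 2 ≤ q ^ 4 from hq4big2, hb4]; ring)
    rw [this, pow_zero]
  calc x ^ q ^ 3 + a * x ^ q ^ 2 + b * x ^ q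
      = (uu : Lf) ^ (q - 1) * x + (uu : Lf) ^ (q ^ 2 - 1) * x ^ q
        + (uu : Lf) ^ (q ^ 3 - 1) * x ^ q ^ 2 + 1 * x ^ q ^ 3
        + (uu : Lf) ^ (q - 1) * x := by
        rw [haeq, hbeq]
        have := CharTwo.add_self_eq_zero ((uu : Lf) ^ (q - 1) * x)
        linear_combination -this
    _ = (uu : Lf) ^ (q ^ 4 - 2) * ((uu : Lf) ^ q * x
          + (uu : Lf) ^ (q ^ 2) * x ^ q
          + (uu : Lf) ^ (q ^ 3) * x ^ q ^ 2
          + (uu : Lf) ^ (q ^ 4) * x ^ q ^ 3)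
        + (uu : Lf) ^ (q - 1) * x := by
        rw [mul_add, mul_add, mul_add,
          ← mul_assoc, ← mul_assoc, ← mul_assoc, ← mul_assoc, E1, E2, E3, E4]
end

section
/- Let q be even and δ ∈ F_{q^6} \ F_{q^3} with h := (δ^{-1} + δ^{-q^3})^{-1} ∈ F_q^*. Set r = 1 + δ^{-1}. Then the minimal polynomial of rh over F_{q^3} is X² + X + r^{1+q^3}h², and consequently Tr_{F_{q^3}/F_2}(h²·r^{1+q^3}) = 1. -/
open Polynomial

-- Artin–Schreier trace lemma
lemma as_trace (F : Type) [Field F] [Finite F] [Algebra (ZMod 2) F] (d : F)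
    (hd : ∀ c : F, c ^ 2 + c ≠ d) : Algebra.trace (ZMod 2) F d = 1 := by
  classical
  haveI : CharP F 2 := charP_of_injective_algebraMap (algebraMap (ZMod 2) F).injective 2
  haveI : Module.Finite (ZMod 2) F := Module.finite_iff_finite.mpr inferInstance
  have hsq : ∀ c : ZMod 2, c ^ 2 = c := by decide
  -- Frobenius as algebra equiv
  let eF : F ≃ₐ[ZMod 2] F :=
    { frobeniusEquiv F 2 with
      commutes' := fun c => by
        show (algebraMap (ZMod 2) F c) ^ 2 = algebraMap (ZMod 2) F c
        rw [← map_pow, hsq] }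
  have htr2 : ∀ x : F, Algebra.trace (ZMod 2) F (x ^ 2) = Algebra.trace (ZMod 2) F x := by
    intro x
    have := Algebra.trace_eq_of_algEquiv eF x
    exact this
  -- the Artin–Schreier map
  have hψadd : ∀ x y : F, (x + y) ^ 2 + (x + y) = (x ^ 2 + x) + (y ^ 2 + y) := by
    intro x y; rw [CharTwo.add_sq]; ring
  let ψ : F →ₗ[ZMod 2] F :=
    { toFun := fun x => x ^ 2 + x
      map_add' := hψadd
      map_smul' := by
        intro c x
        simp only [RingHom.id_apply, Algebra.smul_def, mul_pow, ← map_pow, hsq]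
        ring }
  have hrange_le : LinearMap.range ψ ≤ LinearMap.ker (Algebra.trace (ZMod 2) F) := by
    rintro _ ⟨x, rfl⟩
    simp only [LinearMap.mem_ker]
    show Algebra.trace (ZMod 2) F (x ^ 2 + x) = 0
    rw [map_add, htr2, CharTwo.add_self_eq_zero]
  have hkerψ : LinearMap.ker ψ = Submodule.span (ZMod 2) {(1 : F)} := by
    ext x
    simp only [LinearMap.mem_ker, Submodule.mem_span_singleton]
    constructor
    · intro hx
      have hx' : x * (x + 1) = 0 := by
        have : x * (x + 1) = x ^ 2 + x := by ring
        rw [this]; exact hx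
      rcases mul_eq_zero.mp hx' with h0 | h1
      · exact ⟨0, by simp [h0]⟩
      · refine ⟨1, ?_⟩
        have hx1 : x = -1 := eq_neg_of_add_eq_zero_left h1
        rw [CharTwo.neg_eq] at hx1
        simp [hx1]
    · rintro ⟨a, rfl⟩
      show (a • (1:F)) ^ 2 + a • 1 = 0
      rcases (by decide : ∀ a : ZMod 2, a = 0 ∨ a = 1) a with rfl | rfl <;> simp [CharTwo.add_self_eq_zero]
  have hker_rank : Module.finrank (ZMod 2) (LinearMap.ker ψ) = 1 := by
    rw [hkerψ]; exact finrank_span_singleton one_ne_zero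
  have hsurj : Function.Surjective (Algebra.trace (ZMod 2) F) :=
    Algebra.trace_surjective (ZMod 2) F
  have hrangeT : LinearMap.range (Algebra.trace (ZMod 2) F) = ⊤ :=
    LinearMap.range_eq_top.mpr hsurj
  have h1 := LinearMap.finrank_range_add_finrank_ker ψ
  have h2 := LinearMap.finrank_range_add_finrank_ker (Algebra.trace (ZMod 2) F)
  rw [hrangeT, finrank_top] at h2
  have hfr1 : Module.finrank (ZMod 2) (ZMod 2) = 1 := Module.finrank_self _
  rw [hfr1] at h2
  have heq : LinearMap.range ψ = LinearMap.ker (Algebra.trace (ZMod 2) F) := by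
    apply Submodule.eq_of_le_of_finrank_eq hrange_le
    omega
  by_contra hne
  have h0 : Algebra.trace (ZMod 2) F d = 0 := by
    rcases (by decide : ∀ a : ZMod 2, a = 0 ∨ a = 1) (Algebra.trace (ZMod 2) F d) with h | h
    · exact h
    · exact absurd h hne
  have : d ∈ LinearMap.range ψ := heq ▸ LinearMap.mem_ker.mpr h0
  obtain ⟨c, hc⟩ := this
  exact hd c hc

-- fixed points of x ↦ x^(card L) lie in the image of L
lemma fixed_mem_range (L E : Type) [Field L] [Field E] [Algebra L E] [Fintype L]
    (a : E) (ha : a ^ Fintype.card L = a) : a ∈ Set.range (algebraMap L E) := by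
  classical
  set n := Fintype.card L with hn
  have hn2 : 2 ≤ n := Fintype.one_lt_card
  set p : E[X] := X ^ n - X with hp
  have hdegX : (X : E[X]).degree < (X ^ n : E[X]).degree := by
    rw [degree_X, degree_X_pow]
    exact_mod_cast hn2
  have hpdeg : p.degree = n := by
    rw [hp, degree_sub_eq_left_of_degree_lt hdegX, degree_X_pow]
  have hp0 : p ≠ 0 := fun h => by simp [h] at hpdeg
  have hpnat : p.natDegree = n := natDegree_eq_of_degree_eq_some hpdeg
  set s : Finset E := Finset.univ.image (algebraMap L E) with hs
  have hcard_s : s.card = n := by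
    rw [hs, Finset.card_image_of_injective _ (algebraMap L E).injective, Finset.card_univ]
  have hsub : s ⊆ p.roots.toFinset := by
    intro x hx
    rw [hs, Finset.mem_image] at hx
    obtain ⟨b, _, rfl⟩ := hx
    rw [Multiset.mem_toFinset, mem_roots hp0]
    simp only [IsRoot, hp, eval_sub, eval_pow, eval_X]
    rw [← map_pow, FiniteField.pow_card, sub_self]
  have hcard_roots : p.roots.toFinset.card ≤ n := by
    calc p.roots.toFinset.card ≤ Multiset.card p.roots := p.roots.toFinset_card_le
    _ ≤ p.natDegree := p.card_roots'
    _ = n := hpnat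
  have hseq : s = p.roots.toFinset :=
    Finset.eq_of_subset_of_card_le hsub (by omega)
  have haroot : a ∈ p.roots.toFinset := by
    rw [Multiset.mem_toFinset, mem_roots hp0]
    simp [IsRoot, hp, ha]
  rw [← hseq, hs, Finset.mem_image] at haroot
  obtain ⟨b, _, hb⟩ := haroot
  exact ⟨b, hb⟩
/-- With `h = (δ⁻¹ + δ^{-q³})⁻¹ ∈ F_q^*` and `r = 1 + δ⁻¹`,
the minimal polynomial of `rh` over `F_{q³}` is `X² + X + r^{1+q³}h²`, and
consequently `Tr_{F_{q³}/F₂}(h²r^{1+q³}) = 1`. -/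
theorem minpoly_rh_and_trace (q e : ℕ) (he : 0 < e) (hq : q = 2 ^ e)
    (K L3 E : Type) [Field K] [Fintype K] [Field L3] [Field E]
    [Algebra K L3] [Algebra L3 E] [Algebra K E] [IsScalarTower K L3 E]
    [Algebra (ZMod 2) L3]
    (hcard : Fintype.card K = q)
    (hdim : Module.finrank K L3 = 3) (hdim2 : Module.finrank L3 E = 2)
    (δ : E) (hδ : δ ∉ Set.range (algebraMap L3 E))
    (h : E) (hh : h = (δ⁻¹ + (δ ^ (q ^ 3))⁻¹)⁻¹)
    (hhK : ∃ c : K, c ≠ 0 ∧ h = algebraMap K E c)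
    (r : E) (hr : r = 1 + δ⁻¹) :
    ∃ d : L3, algebraMap L3 E d = r ^ (1 + q ^ 3) * h ^ 2 ∧
      minpoly L3 (r * h) = Polynomial.X ^ 2 + Polynomial.X + Polynomial.C d ∧
      Algebra.trace (ZMod 2) L3 d = 1 := by
  classical
  haveI : CharP L3 2 := charP_of_injective_algebraMap (algebraMap (ZMod 2) L3).injective 2
  haveI : CharP E 2 := charP_of_injective_algebraMap (algebraMap L3 E).injective 2
  haveI : FiniteDimensional K L3 := Module.finite_of_finrank_eq_succ hdim
  haveI : FiniteDimensional L3 E := Module.finite_of_finrank_eq_succ hdim2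
  haveI : Finite L3 := (Module.finite_iff_finite (R := K) (M := L3)).mp inferInstance
  haveI : Fintype L3 := Fintype.ofFinite L3
  haveI : Finite E := (Module.finite_iff_finite (R := L3) (M := E)).mp inferInstance
  haveI : Fintype E := Fintype.ofFinite E
  have hcard3 : Fintype.card L3 = q ^ 3 := by
    rw [Module.card_eq_pow_finrank (K := K), hcard, hdim]
  have hcardE : Fintype.card E = q ^ 3 * q ^ 3 := by
    rw [Module.card_eq_pow_finrank (K := L3), hcard3, hdim2]; ring
  -- characteristic two facts
  have h2E : ∀ x : E, x + x = 0 := CharTwo.add_self_eq_zero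
  -- Frobenius is additive
  have hq3 : q ^ 3 = 2 ^ (e * 3) := by rw [hq, pow_mul]
  have hfadd : ∀ x y : E, (x + y) ^ q ^ 3 = x ^ q ^ 3 + y ^ q ^ 3 := by
    intro x y; rw [hq3]; exact add_pow_char_pow (R := E) x y 2 (e * 3)
  -- elements of L3 are fixed
  have hfix : ∀ b : L3, (algebraMap L3 E b) ^ q ^ 3 = algebraMap L3 E b := by
    intro b
    rw [← map_pow, ← hcard3, FiniteField.pow_card]
  -- facts about h
  obtain ⟨c, hc0, hcE⟩ := hhK
  have hhL3 : h = algebraMap L3 E (algebraMap K L3 c) := by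
    rw [hcE, IsScalarTower.algebraMap_apply K L3 E]
  have hcL3 : algebraMap K L3 c ≠ 0 := fun hx =>
    hc0 ((algebraMap K L3).injective (by rw [hx, map_zero]))
  have hh0 : h ≠ 0 := by
    rw [hhL3]
    exact fun hx => hcL3 ((algebraMap L3 E).injective (by rw [hx, map_zero]))
  have hfh : h ^ q ^ 3 = h := by rw [hhL3]; exact hfix _
  have hδ0 : δ ≠ 0 := by
    rintro rfl; exact hδ ⟨0, by simp⟩
  -- s = δ⁻¹ + δ^{-q³}
  have hs0 : δ⁻¹ + (δ ^ q ^ 3)⁻¹ ≠ (0 : E) := by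
    intro h0; rw [h0, inv_zero] at hh; exact hh0 hh
  have hhs : h * (δ⁻¹ + (δ ^ q ^ 3)⁻¹) = 1 := by rw [hh]; exact inv_mul_cancel₀ hs0
  -- Frobenius of r
  have hone : (1 : E) ^ q ^ 3 = 1 := one_pow _
  have hrq : r ^ q ^ 3 = 1 + (δ ^ q ^ 3)⁻¹ := by
    rw [hr, hfadd, hone, inv_pow]
  have hrsum : r + r ^ q ^ 3 = δ⁻¹ + (δ ^ q ^ 3)⁻¹ := by
    rw [hrq, hr]
    calc 1 + δ⁻¹ + (1 + (δ ^ q ^ 3)⁻¹)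
        = (1 + 1) + (δ⁻¹ + (δ ^ q ^ 3)⁻¹) := by ring
      _ = δ⁻¹ + (δ ^ q ^ 3)⁻¹ := by rw [h2E 1, zero_add]
  set u : E := r * h with hu
  have key1 : u + u ^ q ^ 3 = 1 := by
    rw [hu, mul_pow, hfh, ← add_mul, hrsum, mul_comm]
    exact hhs
  have huq : u ^ q ^ 3 = 1 + u := by
    have := key1
    calc u ^ q ^ 3 = (u + u) + u ^ q ^ 3 := by rw [h2E u, zero_add]
      _ = u + (u + u ^ q ^ 3) := by ring
      _ = u + 1 := by rw [key1]
      _ = 1 + u := by ring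
  -- the norm N
  set N : E := u ^ (1 + q ^ 3) with hN
  have hNu : N = u + u ^ 2 := by
    rw [hN, pow_add, pow_one, huq]; ring
  have hh2 : h ^ (1 + q ^ 3) = h ^ 2 := by
    rw [pow_add, pow_one, hfh]; ring
  have hNval : N = r ^ (1 + q ^ 3) * h ^ 2 := by
    rw [hN, hu, mul_pow, hh2]
  have hcardE' : u ^ (q ^ 3 * q ^ 3) = u := by
    rw [← hcardE]; exact FiniteField.pow_card u
  have hNfix : N ^ q ^ 3 = N := by
    rw [hN, ← pow_mul]
    have h1 : (1 + q ^ 3) * q ^ 3 = q ^ 3 + q ^ 3 * q ^ 3 := by ring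
    rw [h1, pow_add, hcardE', pow_add, pow_one]
    ring
  obtain ⟨d, hd⟩ : N ∈ Set.range (algebraMap L3 E) := by
    apply fixed_mem_range
    rw [hcard3]; exact hNfix
  -- u not in the image of L3
  have hunotin : u ∉ Set.range (algebraMap L3 E) := by
    rintro ⟨b, hb⟩
    have : u ^ q ^ 3 = u := by rw [← hb]; exact hfix b
    rw [this] at key1
    rw [h2E u] at key1
    exact zero_ne_one key1
  refine ⟨d, by rw [hd, hNval], ?_, ?_⟩
  · -- minimal polynomial
    set f : Polynomial L3 := Polynomial.X ^ 2 + Polynomial.X + Polynomial.C d with hf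
    have hfmonic : f.Monic := by
      rw [hf]; monicity!
    have hfdeg : f.natDegree = 2 := by rw [hf]; compute_degree!
    have hfaeval : Polynomial.aeval u f = 0 := by
      rw [hf]
      simp only [map_add, map_pow, Polynomial.aeval_X, Polynomial.aeval_C]
      rw [hd, hNu]
      calc u ^ 2 + u + (u + u ^ 2) = (u ^ 2 + u ^ 2) + (u + u) := by ring
        _ = 0 := by rw [h2E, h2E, add_zero]
    have hint : IsIntegral L3 u := IsIntegral.of_finite L3 u
    have hdvd : minpoly L3 u ∣ f := minpoly.dvd L3 u hfaeval
    have hmdeg_le : (minpoly L3 u).natDegree ≤ 2 := by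
      have := minpoly.natDegree_le (A := L3) u
      rwa [hdim2] at this
    have hmdeg_ne1 : (minpoly L3 u).natDegree ≠ 1 := by
      intro h1
      have : (minpoly L3 u).degree = 1 := by
        rw [Polynomial.degree_eq_natDegree (minpoly.ne_zero hint), h1]; rfl
      have := (minpoly.degree_eq_one_iff).mp this
      exact hunotin ⟨this.choose, this.choose_spec⟩
    have hmpos : 0 < (minpoly L3 u).natDegree := minpoly.natDegree_pos hint
    have hmdeg : (minpoly L3 u).natDegree = 2 := by omega
    -- conclude equality
    obtain ⟨k, hk⟩ := hdvd
    have hk0 : k ≠ 0 := by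
      rintro rfl
      rw [mul_zero] at hk
      exact hfmonic.ne_zero hk
    have hkdeg : k.natDegree = 0 := by
      have := Polynomial.natDegree_mul (minpoly.ne_zero hint) hk0
      rw [← hk, hfdeg, hmdeg] at this
      omega
    obtain ⟨a, rfl⟩ := Polynomial.natDegree_eq_zero.mp hkdeg
    have hlead : f.leadingCoeff = (minpoly L3 u).leadingCoeff * a := by
      rw [hk, Polynomial.leadingCoeff_mul, Polynomial.leadingCoeff_C]
    rw [hfmonic.leadingCoeff, (minpoly.monic hint).leadingCoeff, one_mul] at hlead
    rw [← hlead, map_one, mul_one] at hk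
    exact hk.symm
  · -- trace
    apply as_trace
    intro c' hc'
    apply hunotin
    have hv : (algebraMap L3 E c') ^ 2 + algebraMap L3 E c' = N := by
      rw [← hd, ← map_pow, ← map_add, hc']
    set v : E := algebraMap L3 E c' with hvdef
    have hsum : (u + v) ^ 2 + (u + v) = 0 := by
      rw [CharTwo.add_sq]
      have : u ^ 2 + v ^ 2 + (u + v) = (u ^ 2 + u) + (v ^ 2 + v) := by ring
      rw [this]
      have hu2 : u ^ 2 + u = N := by
        rw [hNu]
        calc u ^ 2 + u = u + u ^ 2 := by ring
          _ = u + u ^ 2 := rfl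
      rw [hu2, hv, h2E]
    have hfact : (u + v) * ((u + v) + 1) = 0 := by
      have : (u + v) * ((u + v) + 1) = (u + v) ^ 2 + (u + v) := by ring
      rw [this, hsum]
    rcases mul_eq_zero.mp hfact with h0 | h1
    · have : u = v := by
        have := eq_neg_of_add_eq_zero_left h0
        rwa [CharTwo.neg_eq] at this
      exact ⟨c', by rw [← hvdef, this]⟩
    · have huv1 : u + v = 1 := by
        have := eq_neg_of_add_eq_zero_left h1
        rwa [CharTwo.neg_eq] at this
      have : u = v + 1 := by
        calc u = u + (v + v) := by rw [h2E v, add_zero]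
          _ = (u + v) + v := by ring
          _ = 1 + v := by rw [huv1]
          _ = v + 1 := by ring
      exact ⟨c' + 1, by rw [map_add, map_one, ← hvdef, this]⟩
end

section
/- Let q be even, and y ∈ F_{q^3} \ F_q. Then Tr_{F_{q^3}/F_q}(y^{q−q^2} + y^{q^2−q}) ≠ 0, where y^{q−q^2} denotes y^q·y^{−q^2}. -/
open Polynomial

/-- An element of a finite field extension fixed by `x ↦ x ^ |K|` lies in the image of `K`. -/
lemma mem_range_of_pow_card_eq {q : ℕ} (K L3 : Type) [Field K] [Fintype K] [Field L3]
    [Fintype L3] [Algebra K L3] (hcard : Fintype.card K = q)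
    (x : L3) (hx : x ^ q = x) : x ∈ Set.range (algebraMap K L3) := by
  classical
  have hq1 : 1 < q := hcard ▸ Fintype.one_lt_card
  set P : L3[X] := X ^ q - X with hP
  have hPne : P ≠ 0 := FiniteField.X_pow_card_sub_X_ne_zero L3 hq1
  have hPdeg : P.natDegree = q := FiniteField.X_pow_card_sub_X_natDegree_eq L3 hq1
  set img : Finset L3 := Finset.univ.image (algebraMap K L3) with himg
  have hinj : Function.Injective (algebraMap K L3) := (algebraMap K L3).injective
  have hcardimg : img.card = q := by
    rw [himg, Finset.card_image_of_injective _ hinj, Finset.card_univ, hcard]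
  have hsub : img ⊆ P.roots.toFinset := by
    intro z hz
    rw [himg, Finset.mem_image] at hz
    obtain ⟨k, -, rfl⟩ := hz
    rw [Multiset.mem_toFinset, mem_roots hPne]
    have hk : k ^ q = k := by rw [← hcard]; exact FiniteField.pow_card k
    simp [hP, IsRoot, ← map_pow, hk]
  have hle : P.roots.toFinset.card ≤ img.card := by
    calc P.roots.toFinset.card ≤ Multiset.card P.roots := Multiset.toFinset_card_le _
    _ ≤ P.natDegree := P.card_roots'
    _ = img.card := by rw [hPdeg, hcardimg]
  have heq : img = P.roots.toFinset := Finset.eq_of_subset_of_card_le hsub hle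
  have hxr : x ∈ P.roots.toFinset := by
    rw [Multiset.mem_toFinset, mem_roots hPne]
    simp [hP, IsRoot, hx]
  rw [← heq, himg, Finset.mem_image] at hxr
  obtain ⟨k, -, hk⟩ := hxr
  exact ⟨k, hk⟩

/-- For `q` even and `y ∈ F_{q³} \ F_q`,
`Tr_{F_{q³}/F_q}(y^{q-q²} + y^{q²-q}) ≠ 0`. -/
theorem trace_nonzero (q : ℕ) (hq : Even q) (hq' : IsPrimePow q)
    (K L3 : Type) [Field K] [Fintype K] [Field L3] [Fintype L3] [Algebra K L3]
    (hcard : Fintype.card K = q)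
    (hdim : Module.finrank K L3 = 3)
    (y : L3) (hy : y ∉ Set.range (algebraMap K L3)) :
    Algebra.trace K L3 (y ^ q * (y ^ (q ^ 2))⁻¹ + y ^ (q ^ 2) * (y ^ q)⁻¹) ≠ 0 := by
  -- characteristic 2
  have hp2 : CharP K 2 := by
    have hp := CharP.char_is_prime K (ringChar K)
    haveI : Fact (ringChar K).Prime := ⟨hp⟩
    obtain ⟨n, -, hn⟩ := FiniteField.card K (ringChar K)
    have h2q : 2 ∣ q := hq.two_dvd
    have h2p : (2 : ℕ) ∣ ringChar K := by
      have : (2 : ℕ) ∣ ringChar K ^ (n : ℕ) := by rw [← hn, hcard]; exact h2q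
      exact Nat.Prime.dvd_of_dvd_pow Nat.prime_two this
    have : ringChar K = 2 := ((Nat.prime_dvd_prime_iff_eq Nat.prime_two hp).mp h2p).symm
    rw [← this]; exact ringChar.charP K
  haveI := hp2
  haveI hpL : CharP L3 2 := charP_of_injective_algebraMap (algebraMap K L3).injective 2
  -- q = 2 ^ e
  obtain ⟨e, -, he⟩ := FiniteField.card K 2
  have hq1 : 1 < q := hcard ▸ Fintype.one_lt_card
  have h2 : (2 : L3) = 0 := by
    have := CharP.cast_eq_zero L3 2
    exact_mod_cast this
  -- card L3 = q ^ 3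
  have hcardL : Fintype.card L3 = q ^ 3 := by
    rw [Module.card_eq_pow_finrank (K := K) (V := L3), hcard, hdim]
  -- the Frobenius x ↦ x ^ q as a K-algebra automorphism
  have hqe : q = 2 ^ (e : ℕ) := by rw [← hcard, he]
  let f0 : L3 →+* L3 := iterateFrobenius L3 2 e
  have hf0 : ∀ x : L3, f0 x = x ^ q := by
    intro x; rw [hqe]; rfl
  have hcomm : ∀ k : K, f0 (algebraMap K L3 k) = algebraMap K L3 k := by
    intro k
    rw [hf0, ← map_pow]
    congr 1
    rw [← hcard]; exact FiniteField.pow_card k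
  let gHom : L3 →ₐ[K] L3 := { f0 with commutes' := hcomm }
  have hginj : Function.Injective gHom := f0.injective
  have hgsurj : Function.Surjective gHom := Finite.injective_iff_surjective.mp hginj
  let g : L3 ≃ₐ[K] L3 := AlgEquiv.ofBijective gHom ⟨hginj, hgsurj⟩
  have hg : ∀ x : L3, g x = x ^ q := hf0
  -- y, y^q, y^{q^2}
  have hy0 : y ≠ 0 := by
    rintro rfl; exact hy ⟨0, by simp⟩
  set a := y with ha
  set b := y ^ q with hb
  set c := y ^ q ^ 2 with hc
  have hb0 : b ≠ 0 := pow_ne_zero _ hy0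
  have hc0 : c ≠ 0 := pow_ne_zero _ hy0
  have hgab : g a = b := hg y
  have hgbc : g b = c := by rw [hg, hb, hc, ← pow_mul, sq]
  have hgca : g c = a := by
    rw [hg, hc, ← pow_mul, ← pow_succ]
    rw [ha, ← hcardL]
    exact FiniteField.pow_card y
  -- key: equality of any two of a, b, c contradicts hy
  have hab_ne : a ≠ b := by
    intro h
    exact hy (mem_range_of_pow_card_eq K L3 hcard y h.symm)
  have hbc_ne : b ≠ c := by
    intro h
    apply hab_ne
    apply hginj
    show g a = g b
    rw [hgab, hgbc, h]
  have hca_ne : c ≠ a := by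
    intro h
    apply hab_ne
    calc a = g c := hgca.symm
    _ = g a := by rw [h]
    _ = b := hgab
  -- trace as a sum over automorphisms
  intro h0
  set t := b * c⁻¹ + c * b⁻¹ with ht
  have htr := trace_eq_sum_automorphisms (K := K) t
  rw [show Algebra.trace K L3 t = 0 from h0, map_zero] at htr
  -- the automorphism group is {1, g, g²}
  have hgne1 : g ≠ 1 := by
    intro h
    apply hab_ne
    have := congrArg (fun σ : L3 ≃ₐ[K] L3 => σ a) h
    simpa [hgab] using this.symm
  have hg2ne1 : g * g ≠ 1 := by
    intro h
    have hggaa : g (g a) = a := by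
      have := congrArg (fun σ : L3 ≃ₐ[K] L3 => σ a) h
      simpa using this
    apply hca_ne
    rw [← hgbc, ← hgab, hggaa]
  have hgg : g * g ≠ g := by
    intro h
    exact hgne1 (mul_right_cancel (h.trans (one_mul g).symm))
  haveI : FiniteDimensional K L3 := inferInstance
  have hcardAut : Fintype.card (L3 ≃ₐ[K] L3) = 3 := by
    rw [← Nat.card_eq_fintype_card, IsGalois.card_aut_eq_finrank, hdim]
  classical
  have h1m : (1 : L3 ≃ₐ[K] L3) ∉ ({g, g * g} : Finset (L3 ≃ₐ[K] L3)) := by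
    simp only [Finset.mem_insert, Finset.mem_singleton]
    push_neg
    exact ⟨fun h => hgne1 h.symm, fun h => hg2ne1 h.symm⟩
  have hgm : g ∉ ({g * g} : Finset (L3 ≃ₐ[K] L3)) := by
    simp only [Finset.mem_singleton]
    exact fun h => hgg h.symm
  have hcard3 : ({1, g, g * g} : Finset (L3 ≃ₐ[K] L3)).card = 3 := by
    rw [Finset.card_insert_of_notMem h1m, Finset.card_insert_of_notMem hgm,
      Finset.card_singleton]
  have huniv : (Finset.univ : Finset (L3 ≃ₐ[K] L3)) = {1, g, g * g} :=
    (Finset.eq_of_subset_of_card_le (Finset.subset_univ _)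
      (by rw [hcard3, Finset.card_univ, hcardAut])).symm
  have hsum : ∑ σ : L3 ≃ₐ[K] L3, σ t = t + (g t + g (g t)) := by
    rw [huniv, Finset.sum_insert h1m, Finset.sum_insert hgm, Finset.sum_singleton]
    rfl
  rw [hsum] at htr
  -- compute g t and g (g t)
  have hginv : ∀ x : L3, g x⁻¹ = (g x)⁻¹ := fun x => map_inv₀ g x
  have hgt : g t = c * a⁻¹ + a * c⁻¹ := by
    rw [ht, map_add, map_mul, map_mul, hginv, hginv, hgbc, hgca]
  have hggt : g (g t) = a * b⁻¹ + b * a⁻¹ := by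
    rw [hgt, map_add, map_mul, map_mul, hginv, hginv, hgca, hgab]
  rw [hggt, hgt, ht] at htr
  clear_value t
  clear_value a b c
  have hfac : (a + b) * (b + c) * (c + a) = 0 := by
    have h0' : (a + b) * (b + c) * (c + a) + 2 * (a * b * c) =
        (b * c⁻¹ + c * b⁻¹ + (c * a⁻¹ + a * c⁻¹ + (a * b⁻¹ + b * a⁻¹))) * (a * b * c) := by
      field_simp
      linear_combination (2 * a * b * c : L3) * h2
    rw [← htr, zero_mul] at h0'
    linear_combination h0' - a * b * c * h2
  rcases mul_eq_zero.mp hfac with hf | hf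
  · rcases mul_eq_zero.mp hf with hf' | hf'
    · exact hab_ne (by linear_combination hf' - b * h2)
    · exact hbc_ne (by linear_combination hf' - c * h2)
  · exact hca_ne (by linear_combination hf - a * h2)
end
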